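/- Let Π : ℒ → ℝ² be continuously differentiable on a compact rectangle ℒ ⊂ ℝ², suppose the Jacobian Π'(t) is continuous, has full rank, and has strictly positive entries for all t ∈ ℒ. Then the equation Π(t) = 0 has at most one solution in ℒ. -/

import Mathlib

open Set

lemma mono_aux (Pi0 : ℝ × ℝ → ℝ × ℝ) (J : ℝ × ℝ → (ℝ × ℝ) →L[ℝ] (ℝ × ℝ))
    (a b : ℝ × ℝ)
    (hderiv : ∀ t ∈ Icc a b, HasFDerivAt Pi0 (J t) t)
    (proj : (ℝ × ℝ) →L[ℝ] ℝ)
    (hp : ∀ u ∈ Icc a b, 0 < proj (J u (1,0)) ∧ 0 < proj (J u (0,1))) :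
    ∀ p ∈ Icc a b, ∀ q ∈ Icc a b, p ≤ q → p ≠ q → proj (Pi0 p) < proj (Pi0 q) := by
  intro p hpm q hqm hle hne
  set γ : ℝ → ℝ × ℝ := fun θ => p + θ • (q - p) with hγdef
  have hmem : ∀ θ ∈ Icc (0:ℝ) 1, γ θ ∈ Icc a b := by
    intro θ hθ
    have h := (convex_Icc a b) hpm hqm (by linarith [hθ.2] : (0:ℝ) ≤ 1 - θ) hθ.1 (by ring)
    have : γ θ = (1 - θ) • p + θ • q := by
      simp only [hγdef]; module
    rw [this]; exact h
  have hg : ∀ θ ∈ Icc (0:ℝ) 1,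
      HasDerivAt (fun θ => proj (Pi0 (γ θ))) (proj (J (γ θ) (q - p))) θ := by
    intro θ hθ
    have h1 : HasDerivAt γ (q - p) θ := by
      have h0 : HasDerivAt (fun θ : ℝ => θ • (q - p)) (q - p) θ := by
        simpa using (hasDerivAt_id θ).smul_const (q - p)
      simpa [hγdef] using h0.const_add p
    have h2 := (hderiv _ (hmem θ hθ)).comp_hasDerivAt θ h1
    exact proj.hasFDerivAt.comp_hasDerivAt θ h2
  obtain ⟨c, hc, hslope⟩ := exists_hasDerivAt_eq_slope (fun θ => proj (Pi0 (γ θ)))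
    (fun θ => proj (J (γ θ) (q - p))) one_pos
    (fun θ hθ => (hg θ hθ).continuousAt.continuousWithinAt)
    (fun θ hθ => hg θ (Ioo_subset_Icc_self hθ))
  have hγ1 : γ 1 = q := by simp [hγdef]
  have hγ0 : γ 0 = p := by simp [hγdef]
  rw [hγ1, hγ0] at hslope
  have hpos : 0 < proj (J (γ c) (q - p)) := by
    have hu := hp (γ c) (hmem c (Ioo_subset_Icc_self hc))
    have hd : q - p = (q.1 - p.1) • ((1:ℝ),(0:ℝ)) + (q.2 - p.2) • ((0:ℝ),(1:ℝ)) := by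
      ext
      · simp
      · simp
    rw [hd]
    have h1 : p.1 ≤ q.1 := hle.1
    have h2 : p.2 ≤ q.2 := hle.2
    have h3 : p.1 ≠ q.1 ∨ p.2 ≠ q.2 := by
      by_contra h
      push_neg at h
      exact hne (Prod.ext h.1 h.2)
    simp only [map_add, map_smul, smul_eq_mul]
    rcases h3 with h3 | h3
    · nlinarith [hu.1, hu.2, h3.lt_of_le h1]
    · nlinarith [hu.1, hu.2, h3.lt_of_le h2]
  rw [hslope] at hpos
  simp at hpos
  linarith

set_option maxHeartbeats 1000000 in
lemma key (Pi0 : ℝ × ℝ → ℝ × ℝ) (J : ℝ × ℝ → (ℝ × ℝ) →L[ℝ] (ℝ × ℝ))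
    (a b : ℝ × ℝ)
    (hderiv : ∀ t ∈ Icc a b, HasFDerivAt Pi0 (J t) t)
    (hfullrank : ∀ t ∈ Icc a b, Function.Bijective (J t))
    (hpos : ∀ t ∈ Icc a b,
      0 < (J t (1, 0)).1 ∧ 0 < (J t (1, 0)).2 ∧
      0 < (J t (0, 1)).1 ∧ 0 < (J t (0, 1)).2)
    (s1 s2 t1 t2 : ℝ)
    (hs : (s1, s2) ∈ Icc a b) (ht : (t1, t2) ∈ Icc a b)
    (h1 : s1 < t1) (h2 : t2 < s2)
    (hPs : Pi0 (s1, s2) = 0) (hPt : Pi0 (t1, t2) = 0) : False := by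
  obtain ⟨⟨has1, has2⟩, ⟨hbs1, hbs2⟩⟩ :
      (a.1 ≤ s1 ∧ a.2 ≤ s2) ∧ (s1 ≤ b.1 ∧ s2 ≤ b.2) := by
    simpa [Set.mem_Icc, Prod.le_def] using hs
  obtain ⟨⟨hat1, hat2⟩, ⟨hbt1, hbt2⟩⟩ :
      (a.1 ≤ t1 ∧ a.2 ≤ t2) ∧ (t1 ≤ b.1 ∧ t2 ≤ b.2) := by
    simpa [Set.mem_Icc, Prod.le_def] using ht
  have hsub : ∀ x ∈ Icc s1 t1, ∀ y ∈ Icc t2 s2, ((x, y) : ℝ × ℝ) ∈ Icc a b := by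
    intro x hx y hy
    simp only [Set.mem_Icc, Prod.le_def]
    exact ⟨⟨by linarith [hx.1], by linarith [hy.1]⟩, ⟨by linarith [hx.2], by linarith [hy.2]⟩⟩
  have hPs1 : (Pi0 (s1, s2)).1 = 0 := by rw [hPs]; rfl
  have hPt1 : (Pi0 (t1, t2)).1 = 0 := by rw [hPt]; rfl
  have hPs2 : (Pi0 (s1, s2)).2 = 0 := by rw [hPs]; rfl
  have hPt2 : (Pi0 (t1, t2)).2 = 0 := by rw [hPt]; rfl
  have mono1 : ∀ p ∈ Icc a b, ∀ q ∈ Icc a b, p ≤ q → p ≠ q → (Pi0 p).1 < (Pi0 q).1 := by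
    have := mono_aux Pi0 J a b hderiv (ContinuousLinearMap.fst ℝ ℝ ℝ)
      (fun u hu => by simpa using ⟨(hpos u hu).1, (hpos u hu).2.2.1⟩)
    simpa using this
  have mono1le : ∀ p ∈ Icc a b, ∀ q ∈ Icc a b, p ≤ q → (Pi0 p).1 ≤ (Pi0 q).1 := by
    intro p hp q hq hle
    rcases eq_or_ne p q with rfl | hne
    · exact le_refl _
    · exact (mono1 p hp q hq hle hne).le
  have hcPi : ContinuousOn Pi0 (Icc a b) :=
    fun u hu => (hderiv u hu).continuousAt.continuousWithinAt
  -- existence of the implicit function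
  have hex : ∀ x ∈ Icc s1 t1, ∃ y, y ∈ Icc t2 s2 ∧ (Pi0 (x, y)).1 = 0 := by
    intro x hx
    have hxb1 : ((x, t2) : ℝ × ℝ) ∈ Icc a b := hsub x hx t2 ⟨le_refl _, h2.le⟩
    have hxb2 : ((x, s2) : ℝ × ℝ) ∈ Icc a b := hsub x hx s2 ⟨h2.le, le_refl _⟩
    have hlo : (Pi0 (x, t2)).1 ≤ 0 := by
      have := mono1le (x, t2) hxb1 (t1, t2) ht ⟨hx.2, le_refl _⟩
      rwa [hPt1] at this
    have hhi : 0 ≤ (Pi0 (x, s2)).1 := by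
      have := mono1le (s1, s2) hs (x, s2) hxb2 ⟨hx.1, le_refl _⟩
      rwa [hPs1] at this
    have hcf : ContinuousOn (fun y => (Pi0 (x, y)).1) (Icc t2 s2) := by
      apply continuous_fst.comp_continuousOn
      apply hcPi.comp ((Continuous.prodMk_right x).continuousOn)
      intro y hy
      exact hsub x hx y hy
    have := intermediate_value_Icc h2.le hcf
    obtain ⟨y, hy, hfy⟩ := this ⟨hlo, hhi⟩
    exact ⟨y, hy, hfy⟩
  choose! φ hφmem hφ0 using hex
  have huniq : ∀ x ∈ Icc s1 t1, ∀ y ∈ Icc t2 s2, (Pi0 (x, y)).1 = 0 → y = φ x := by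
    intro x hx y hy h0
    have hym : ((x, y) : ℝ × ℝ) ∈ Icc a b := hsub x hx y hy
    have hφm : ((x, φ x) : ℝ × ℝ) ∈ Icc a b := hsub x hx _ (hφmem x hx)
    rcases lt_trichotomy y (φ x) with h | h | h
    · exfalso
      have := mono1 (x, y) hym (x, φ x) hφm ⟨le_refl _, h.le⟩
        (fun he => h.ne (congrArg Prod.snd he))
      rw [h0, hφ0 x hx] at this
      exact lt_irrefl _ this
    · exact h
    · exfalso
      have := mono1 (x, φ x) hφm (x, y) hym ⟨le_refl _, h.le⟩
        (fun he => h.ne (congrArg Prod.snd he))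
      rw [h0, hφ0 x hx] at this
      exact lt_irrefl _ this
  have hs1m : s1 ∈ Icc s1 t1 := ⟨le_refl _, h1.le⟩
  have ht1m : t1 ∈ Icc s1 t1 := ⟨h1.le, le_refl _⟩
  have hφs1 : φ s1 = s2 := (huniq s1 hs1m s2 ⟨h2.le, le_refl _⟩ hPs1).symm
  have hφt1 : φ t1 = t2 := (huniq t1 ht1m t2 ⟨le_refl _, h2.le⟩ hPt1).symm
  -- continuity of φ
  have hφcont : ∀ x₀ ∈ Icc s1 t1, ContinuousWithinAt φ (Icc s1 t1) x₀ := by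
    intro x₀ hx₀
    rw [ContinuousWithinAt, Metric.tendsto_nhds]
    intro ε hε
    have hφm0 := hφmem x₀ hx₀
    have hupper : ∀ᶠ x in nhdsWithin x₀ (Icc s1 t1), φ x < φ x₀ + ε := by
      by_cases hcase : φ x₀ + ε ≤ s2
      · set cc := φ x₀ + ε with hcc
        have hccmem : cc ∈ Icc t2 s2 := ⟨by linarith [hφm0.1], hcase⟩
        have hccb : ((x₀, cc) : ℝ × ℝ) ∈ Icc a b := hsub x₀ hx₀ cc hccmem
        have hφb : ((x₀, φ x₀) : ℝ × ℝ) ∈ Icc a b := hsub x₀ hx₀ _ hφm0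
        have hpos0 : 0 < (Pi0 (x₀, cc)).1 := by
          have := mono1 (x₀, φ x₀) hφb (x₀, cc) hccb ⟨le_refl _, by linarith⟩
            (by intro he; have h2 := congrArg Prod.snd he; simp at h2; linarith)
          rwa [hφ0 x₀ hx₀] at this
        have hg : ContinuousWithinAt (fun x => (Pi0 (x, cc)).1) (Icc s1 t1) x₀ := by
          have hmk : ContinuousWithinAt (fun x : ℝ => ((x, cc) : ℝ × ℝ)) (Icc s1 t1) x₀ :=
            (continuous_id.prodMk continuous_const).continuousWithinAt
          have hcmp : ContinuousWithinAt (fun x : ℝ => Pi0 (x, cc)) (Icc s1 t1) x₀ :=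
            ContinuousWithinAt.comp (hcPi (x₀, cc) hccb) hmk
              (fun x hx => hsub x hx cc hccmem)
          exact continuous_fst.continuousAt.comp_continuousWithinAt hcmp
        have hev : ∀ᶠ x in nhdsWithin x₀ (Icc s1 t1), 0 < (Pi0 (x, cc)).1 :=
          hg.eventually (eventually_gt_nhds hpos0)
        filter_upwards [hev, self_mem_nhdsWithin] with x hgx hxm
        by_contra hcon
        push_neg at hcon
        have hccx : ((x, cc) : ℝ × ℝ) ∈ Icc a b := hsub x hxm cc hccmem
        have hφx : ((x, φ x) : ℝ × ℝ) ∈ Icc a b := hsub x hxm _ (hφmem x hxm)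
        have := mono1le (x, cc) hccx (x, φ x) hφx ⟨le_refl _, hcon⟩
        rw [hφ0 x hxm] at this
        linarith
      · push_neg at hcase
        filter_upwards [self_mem_nhdsWithin] with x hx
        have := (hφmem x hx).2
        linarith
    have hlower : ∀ᶠ x in nhdsWithin x₀ (Icc s1 t1), φ x₀ - ε < φ x := by
      by_cases hcase : t2 ≤ φ x₀ - ε
      · set cc := φ x₀ - ε with hcc
        have hccmem : cc ∈ Icc t2 s2 := ⟨hcase, by linarith [hφm0.2]⟩
        have hccb : ((x₀, cc) : ℝ × ℝ) ∈ Icc a b := hsub x₀ hx₀ cc hccmem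
        have hφb : ((x₀, φ x₀) : ℝ × ℝ) ∈ Icc a b := hsub x₀ hx₀ _ hφm0
        have hpos0 : (Pi0 (x₀, cc)).1 < 0 := by
          have := mono1 (x₀, cc) hccb (x₀, φ x₀) hφb ⟨le_refl _, by linarith⟩
            (by intro he; have h2 := congrArg Prod.snd he; simp at h2; linarith)
          rwa [hφ0 x₀ hx₀] at this
        have hg : ContinuousWithinAt (fun x => (Pi0 (x, cc)).1) (Icc s1 t1) x₀ := by
          have hmk : ContinuousWithinAt (fun x : ℝ => ((x, cc) : ℝ × ℝ)) (Icc s1 t1) x₀ :=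
            (continuous_id.prodMk continuous_const).continuousWithinAt
          have hcmp : ContinuousWithinAt (fun x : ℝ => Pi0 (x, cc)) (Icc s1 t1) x₀ :=
            ContinuousWithinAt.comp (hcPi (x₀, cc) hccb) hmk
              (fun x hx => hsub x hx cc hccmem)
          exact continuous_fst.continuousAt.comp_continuousWithinAt hcmp
        have hev : ∀ᶠ x in nhdsWithin x₀ (Icc s1 t1), (Pi0 (x, cc)).1 < 0 :=
          hg.eventually (eventually_lt_nhds hpos0)
        filter_upwards [hev, self_mem_nhdsWithin] with x hgx hxm
        by_contra hcon
        push_neg at hcon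
        have hccx : ((x, cc) : ℝ × ℝ) ∈ Icc a b := hsub x hxm cc hccmem
        have hφx : ((x, φ x) : ℝ × ℝ) ∈ Icc a b := hsub x hxm _ (hφmem x hxm)
        have := mono1le (x, φ x) hφx (x, cc) hccx ⟨le_refl _, hcon⟩
        rw [hφ0 x hxm] at this
        linarith
      · push_neg at hcase
        filter_upwards [self_mem_nhdsWithin] with x hx
        have := (hφmem x hx).1
        linarith
    filter_upwards [hupper, hlower] with x hu hl
    rw [Real.dist_eq, abs_sub_lt_iff]
    constructor <;> linarith
  -- differentiability of φ on the interior
  have hφderiv : ∀ x₀ ∈ Ioo s1 t1,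
      HasDerivAt φ (-((J (x₀, φ x₀) (1, 0)).1 / (J (x₀, φ x₀) (0, 1)).1)) x₀ := by
    intro x₀ hx₀
    have hx₀' : x₀ ∈ Icc s1 t1 := Ioo_subset_Icc_self hx₀
    set y₀ := φ x₀ with hy₀
    have hpmem : ((x₀, y₀) : ℝ × ℝ) ∈ Icc a b := hsub x₀ hx₀' y₀ (hφmem x₀ hx₀')
    set aa := (J (x₀, y₀) (1, 0)).1 with haadef
    set bb := (J (x₀, y₀) (0, 1)).1 with hbbdef
    have haa : 0 < aa := (hpos _ hpmem).1
    have hbb : 0 < bb := (hpos _ hpmem).2.2.1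
    set A := (ContinuousLinearMap.fst ℝ ℝ ℝ).comp (J (x₀, y₀)) with hAdef
    have hF1 : HasFDerivAt (fun p => (Pi0 p).1) A (x₀, y₀) :=
      (ContinuousLinearMap.fst ℝ ℝ ℝ).hasFDerivAt.comp _ (hderiv _ hpmem)
    have hAcalc : ∀ u v : ℝ, A (u, v) = aa * u + bb * v := by
      intro u v
      have huv : ((u, v) : ℝ × ℝ) = u • ((1:ℝ), (0:ℝ)) + v • ((0:ℝ), (1:ℝ)) := by
        ext
        · simp
        · simp
      rw [hAdef, huv, map_add, map_smul, map_smul]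
      simp [smul_eq_mul, haadef, hbbdef]
      ring
    have hlo := hF1.isLittleO
    rw [Asymptotics.isLittleO_iff] at hlo
    have hIccmem : Icc s1 t1 ∈ nhds x₀ := Icc_mem_nhds hx₀.1 hx₀.2
    have hnw : nhdsWithin x₀ (Icc s1 t1) = nhds x₀ := nhdsWithin_eq_nhds.mpr hIccmem
    have hφtd : Filter.Tendsto φ (nhds x₀) (nhds y₀) := by
      have := hφcont x₀ hx₀'
      rw [ContinuousWithinAt, hnw] at this
      exact this
    have htend : Filter.Tendsto (fun x => ((x, φ x) : ℝ × ℝ)) (nhds x₀) (nhds (x₀, y₀)) :=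
      Filter.Tendsto.prodMk_nhds Filter.tendsto_id hφtd
    have hEst : ∀ ε > (0:ℝ), ∀ᶠ x in nhds x₀,
        |aa * (x - x₀) + bb * (φ x - y₀)| ≤ ε * (|x - x₀| + |φ x - y₀|) := by
      intro ε hε
      have h1 := htend.eventually (hlo hε)
      have h2 : ∀ᶠ x in nhds x₀, x ∈ Icc s1 t1 := hIccmem
      filter_upwards [h1, h2] with x hx hxm
      have hz1 : (Pi0 (x, φ x)).1 = 0 := hφ0 x hxm
      have hz0 : (Pi0 (x₀, y₀)).1 = 0 := hφ0 x₀ hx₀'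
      have hsubxy : ((x, φ x) : ℝ × ℝ) - (x₀, y₀) = (x - x₀, φ x - y₀) := rfl
      rw [hz1, hz0, hsubxy, hAcalc] at hx
      have hnorm : ‖((x - x₀, φ x - y₀) : ℝ × ℝ)‖ ≤ |x - x₀| + |φ x - y₀| := by
        rw [Prod.norm_def]
        simp only [Real.norm_eq_abs]
        exact max_le (by linarith [abs_nonneg (φ x - y₀)]) (by linarith [abs_nonneg (x - x₀)])
      rw [show (0:ℝ) - 0 - (aa * (x - x₀) + bb * (φ x - y₀))
            = -(aa * (x - x₀) + bb * (φ x - y₀)) by ring, norm_neg, Real.norm_eq_abs] at hx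
      exact hx.trans (mul_le_mul_of_nonneg_left hnorm hε.le)
    set C := 2 * aa / bb + 1 with hCdef
    have hC : 0 < C := by positivity
    have hLip : ∀ᶠ x in nhds x₀, |φ x - y₀| ≤ C * |x - x₀| := by
      filter_upwards [hEst (bb / 2) (by positivity)] with x hx
      have h2 : |bb * (φ x - y₀)| ≤ |aa * (x - x₀) + bb * (φ x - y₀)| + |aa * (x - x₀)| := by
        calc |bb * (φ x - y₀)|
            = |(aa * (x - x₀) + bb * (φ x - y₀)) + (-(aa * (x - x₀)))| := by
              conv_lhs => rw [show bb * (φ x - y₀)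
                  = (aa * (x - x₀) + bb * (φ x - y₀)) + (-(aa * (x - x₀))) from by ring]
          _ ≤ |aa * (x - x₀) + bb * (φ x - y₀)| + |(-(aa * (x - x₀)))| := abs_add_le _ _
          _ = |aa * (x - x₀) + bb * (φ x - y₀)| + |aa * (x - x₀)| := by rw [abs_neg]
      rw [abs_mul, abs_of_pos hbb] at h2
      rw [abs_mul, abs_of_pos haa] at h2
      have hxa := abs_nonneg (x - x₀)
      have hya := abs_nonneg (φ x - y₀)
      rw [hCdef, div_add' _ _ _ (ne_of_gt hbb), div_mul_eq_mul_div, le_div_iff₀ hbb]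
      nlinarith [hx, h2, hbb.le, haa.le]
    rw [hasDerivAt_iff_isLittleO, Asymptotics.isLittleO_iff]
    intro c hc
    have hεc : (0:ℝ) < c * bb / (1 + C) := by positivity
    filter_upwards [hEst (c * bb / (1 + C)) hεc, hLip] with x h1 h2
    have hw : φ x - y₀ - (x - x₀) • (-(aa / bb)) = φ x - y₀ + aa / bb * (x - x₀) := by
      simp [smul_eq_mul]; ring
    have hkey : bb * |φ x - y₀ + aa / bb * (x - x₀)| = |aa * (x - x₀) + bb * (φ x - y₀)| := by
      have e : aa * (x - x₀) + bb * (φ x - y₀) = bb * (φ x - y₀ + aa / bb * (x - x₀)) := by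
        field_simp
        ring
      rw [e, abs_mul, abs_of_pos hbb]
    have hfin : |φ x - y₀ + aa / bb * (x - x₀)| ≤ c * |x - x₀| := by
      have e1 : c * bb / (1 + C) * (|x - x₀| + |φ x - y₀|) ≤ c * bb / (1 + C) * ((1 + C) * |x - x₀|) := by
        apply mul_le_mul_of_nonneg_left _ (le_of_lt hεc)
        nlinarith [abs_nonneg (x - x₀)]
      have e2 : c * bb / (1 + C) * ((1 + C) * |x - x₀|) = c * bb * |x - x₀| := by
        field_simp
      nlinarith [h1.trans (e1.trans_eq e2), hkey, abs_nonneg (φ x - y₀ + aa / bb * (x - x₀))]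
    simp only [Real.norm_eq_abs]
    rw [hw]
    exact hfin
  -- the function ψ along the zero curve of the first component
  set ψ : ℝ → ℝ := fun x => (Pi0 (x, φ x)).2 with hψdef
  have hψderiv : ∀ x ∈ Ioo s1 t1, HasDerivAt ψ
      ((J (x, φ x) (1, 0)).2
        + (-((J (x, φ x) (1, 0)).1 / (J (x, φ x) (0, 1)).1)) * (J (x, φ x) (0, 1)).2) x := by
    intro x hx
    have hx' : x ∈ Icc s1 t1 := Ioo_subset_Icc_self hx
    have hmem : ((x, φ x) : ℝ × ℝ) ∈ Icc a b := hsub x hx' _ (hφmem x hx')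
    set m := -((J (x, φ x) (1, 0)).1 / (J (x, φ x) (0, 1)).1) with hm
    have hcurve : HasDerivAt (fun x => ((x, φ x) : ℝ × ℝ)) ((1 : ℝ), m) x :=
      (hasDerivAt_id x).prodMk (hφderiv x hx)
    have hcomp := (hderiv _ hmem).comp_hasDerivAt x hcurve
    have hsnd := (ContinuousLinearMap.snd ℝ ℝ ℝ).hasFDerivAt.comp_hasDerivAt x hcomp
    have hval : (ContinuousLinearMap.snd ℝ ℝ ℝ) ((J (x, φ x)) ((1 : ℝ), m))
        = (J (x, φ x) (1, 0)).2 + m * (J (x, φ x) (0, 1)).2 := by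
      have h1m : (((1 : ℝ), m) : ℝ × ℝ) = (1:ℝ) • ((1:ℝ),(0:ℝ)) + m • ((0:ℝ),(1:ℝ)) := by
        ext
        · simp
        · simp
      rw [h1m, map_add, map_smul, map_smul]
      simp [smul_eq_mul]
    rw [hval] at hsnd
    exact hsnd
  have hψcont : ContinuousOn ψ (Icc s1 t1) := by
    have hcur : ContinuousOn (fun x => ((x, φ x) : ℝ × ℝ)) (Icc s1 t1) :=
      ContinuousOn.prodMk continuousOn_id (fun x hx => hφcont x hx)
    have hcmp : ContinuousOn (fun x => Pi0 (x, φ x)) (Icc s1 t1) :=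
      hcPi.comp hcur (fun x hx => hsub x hx _ (hφmem x hx))
    exact continuous_snd.comp_continuousOn hcmp
  obtain ⟨c, hc, hslope⟩ := exists_hasDerivAt_eq_slope ψ _ h1 hψcont hψderiv
  have hc' : c ∈ Icc s1 t1 := Ioo_subset_Icc_self hc
  have hmemc : ((c, φ c) : ℝ × ℝ) ∈ Icc a b := hsub c hc' _ (hφmem c hc')
  have hψs : ψ s1 = 0 := by
    show (Pi0 (s1, φ s1)).2 = 0
    rw [hφs1]
    exact hPs2
  have hψt : ψ t1 = 0 := by
    show (Pi0 (t1, φ t1)).2 = 0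
    rw [hφt1]
    exact hPt2
  rw [hψs, hψt] at hslope
  norm_num at hslope
  set A1 := J (c, φ c) (1, 0) with hA1
  set A2 := J (c, φ c) (0, 1) with hA2
  have ha12 : 0 < A2.1 := (hpos _ hmemc).2.2.1
  have hdet : A1.1 * A2.2 - A2.1 * A1.2 ≠ 0 := by
    intro h0
    have hinj := (hfullrank _ hmemc).injective
    have hv : (J (c, φ c)) ((A2.1, -A1.1) : ℝ × ℝ) = 0 := by
      have h : ((A2.1, -A1.1) : ℝ × ℝ) = A2.1 • ((1:ℝ),(0:ℝ)) + (-A1.1) • ((0:ℝ),(1:ℝ)) := by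
        ext
        · simp
        · simp
      rw [h, map_add, map_smul, map_smul]
      ext
      · simp [smul_eq_mul]
        ring
      · simp [smul_eq_mul]
        nlinarith [h0]
    have hz : ((A2.1, -A1.1) : ℝ × ℝ) = 0 := by
      apply hinj
      rw [hv, map_zero]
    have := congrArg Prod.fst hz
    simp at this
    linarith
  apply hdet
  have hne : A2.1 ≠ 0 := ne_of_gt ha12
  field_simp at hslope
  linarith [hslope]

/-- If `Pi0 : ℝ² → ℝ²` is continuously differentiable on a compact rectangle
`ℒ = Icc a b`, with Jacobian `J` continuous, of full rank and with strictly positive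
entries everywhere on `ℒ`, then `Pi0(t) = 0` has at most one solution in `ℒ`. -/
theorem stmt10
    (Pi0 : ℝ × ℝ → ℝ × ℝ) (J : ℝ × ℝ → (ℝ × ℝ) →L[ℝ] (ℝ × ℝ))
    (a b : ℝ × ℝ) (hab : a ≤ b)
    (hderiv : ∀ t ∈ Icc a b, HasFDerivAt Pi0 (J t) t)
    (hJcont : ContinuousOn J (Icc a b))
    (hfullrank : ∀ t ∈ Icc a b, Function.Bijective (J t))
    (hpos : ∀ t ∈ Icc a b,
      0 < (J t (1, 0)).1 ∧ 0 < (J t (1, 0)).2 ∧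
      0 < (J t (0, 1)).1 ∧ 0 < (J t (0, 1)).2) :
    ∀ s ∈ Icc a b, ∀ t ∈ Icc a b, Pi0 s = 0 → Pi0 t = 0 → s = t := by
  intro s hs t ht hPs hPt
  by_contra hne
  have mono1 : ∀ p ∈ Icc a b, ∀ q ∈ Icc a b, p ≤ q → p ≠ q → (Pi0 p).1 < (Pi0 q).1 := by
    have := mono_aux Pi0 J a b hderiv (ContinuousLinearMap.fst ℝ ℝ ℝ)
      (fun u hu => by simpa using ⟨(hpos u hu).1, (hpos u hu).2.2.1⟩)
    simpa using this
  have hcomp : ∀ p q : ℝ × ℝ, p ∈ Icc a b → q ∈ Icc a b → p ≤ q → p ≠ q →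
      Pi0 p = 0 → Pi0 q = 0 → False := by
    intro p q hp hq hle hne' hzp hzq
    have := mono1 p hp q hq hle hne'
    rw [hzp, hzq] at this
    exact lt_irrefl _ this
  rcases lt_trichotomy s.1 t.1 with h | h | h
  · rcases le_or_gt s.2 t.2 with h' | h'
    · exact hcomp s t hs ht ⟨h.le, h'⟩ hne hPs hPt
    · exact key Pi0 J a b hderiv hfullrank hpos s.1 s.2 t.1 t.2
        (by rw [Prod.mk.eta]; exact hs) (by rw [Prod.mk.eta]; exact ht) h h'
        (by rw [Prod.mk.eta]; exact hPs) (by rw [Prod.mk.eta]; exact hPt)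
  · rcases lt_trichotomy s.2 t.2 with h' | h' | h'
    · exact hcomp s t hs ht ⟨h.le, h'.le⟩ hne hPs hPt
    · exact hne (Prod.ext h h')
    · exact hcomp t s ht hs ⟨h.ge, h'.le⟩ (Ne.symm hne) hPt hPs
  · rcases le_or_gt t.2 s.2 with h' | h'
    · exact hcomp t s ht hs ⟨h.le, h'⟩ (Ne.symm hne) hPt hPs
    · exact key Pi0 J a b hderiv hfullrank hpos t.1 t.2 s.1 s.2
        (by rw [Prod.mk.eta]; exact ht) (by rw [Prod.mk.eta]; exact hs) h h'
        (by rw [Prod.mk.eta]; exact hPt) (by rw [Prod.mk.eta]; exact hPs)
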